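/- There exists K ∈ ℕ such that for all k ≥ K the following holds: with S = {0, 1} ∪ {2^(2^i) : 1 ≤ i ≤ k−1} and a = 2^(2^k), one has ∑_{e ∈ S} (1 − 1/(2a))^{2e} ≥ k, i.e., g_S(1 − 1/(2a)) ≥ k. -/

import Mathlib

open Real Finset

/-- `g_S(t) = ∑_{e ∈ S} t^(2e)`. -/
noncomputable def gS (S : Finset ℕ) (t : ℝ) : ℝ := ∑ e ∈ S, t ^ (2 * e)

/-- `h_S(t) = ∑_{e ∈ S} e² t^(2e-2)` (the term for `e = 0` being `0`). -/
noncomputable def hS (S : Finset ℕ) (t : ℝ) : ℝ := ∑ e ∈ S, (e : ℝ) ^ 2 * t ^ (2 * e - 2)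

/-- `q_S(t) = ∑_{e ∈ S} e t^(2e-1)` (the term for `e = 0` being `0`). -/
noncomputable def qS (S : Finset ℕ) (t : ℝ) : ℝ := ∑ e ∈ S, (e : ℝ) * t ^ (2 * e - 1)

/-- `E_S(t) = g_S(t) h_S(t) - q_S(t)²`. -/
noncomputable def ES (S : Finset ℕ) (t : ℝ) : ℝ := gS S t * hS S t - qS S t ^ 2

/-- The expected number of real zeros in `(0,1)`, given by the Edelman–Kostlan integral. -/
noncomputable def zS (S : Finset ℕ) : ℝ :=
  (1 / Real.pi) * ∫ t in (0 : ℝ)..1, Real.sqrt (ES S t) / gS S t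

theorem stmt14 :
    ∃ K : ℕ, ∀ k : ℕ, K ≤ k →
      gS ({0, 1} ∪ (Finset.Icc 1 (k - 1)).image (fun i => 2 ^ (2 ^ i)))
          (1 - 1 / (2 * ((2 : ℝ) ^ (2 ^ k)))) ≥ (k : ℝ) := by
  unfold gS
  use 2
  intro k hk
  set S : Finset ℕ := {0, 1} ∪ (Finset.Icc 1 (k - 1)).image (fun i => 2 ^ (2 ^ i)) with hS
  set a : ℝ := (2 : ℝ) ^ (2 ^ k) with ha
  have ha1 : (1 : ℝ) ≤ a := one_le_pow₀ (by norm_num)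
  have ha0 : (0 : ℝ) < a := by linarith
  -- disjointness
  have hdisj : Disjoint ({0, 1} : Finset ℕ) ((Finset.Icc 1 (k - 1)).image (fun i => 2 ^ (2 ^ i))) := by
    rw [Finset.disjoint_left]
    intro x hx hx'
    simp only [Finset.mem_image, Finset.mem_Icc] at hx'
    obtain ⟨i, ⟨hi1, _⟩, rfl⟩ := hx'
    have : 4 ≤ 2 ^ 2 ^ i := by
      calc (4:ℕ) = 2 ^ 2 ^ 1 := by norm_num
      _ ≤ 2 ^ 2 ^ i := Nat.pow_le_pow_right (by norm_num) (Nat.pow_le_pow_right (by norm_num) hi1)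
    simp only [Finset.mem_insert, Finset.mem_singleton] at hx
    omega
  have hinj : Set.InjOn (fun i : ℕ => 2 ^ (2 ^ i)) (Finset.Icc 1 (k-1)) := by
    intro x _ y _ h
    simp only at h
    have := Nat.pow_right_injective (le_refl 2) h
    exact Nat.pow_right_injective (le_refl 2) this
  -- card
  have hcard : S.card = k + 1 := by
    rw [hS, Finset.card_union_of_disjoint hdisj, Finset.card_image_of_injOn hinj]
    simp
    omega
  -- sum of exponents bound in ℕ
  have hEnat : (∑ e ∈ S, e) ≤ 2 ^ 2 ^ k := by
    rw [hS, Finset.sum_union hdisj, Finset.sum_image (fun x hx y hy h => hinj hx hy h)]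
    have h01 : (∑ e ∈ ({0,1} : Finset ℕ), e) = 1 := by decide
    rw [h01]
    set M : ℕ := 2 ^ 2 ^ (k-1) with hM
    have hMb : ∀ i ∈ Finset.Icc 1 (k-1), 2 ^ 2 ^ i ≤ M := by
      intro i hi
      simp only [Finset.mem_Icc] at hi
      exact Nat.pow_le_pow_right (by norm_num) (Nat.pow_le_pow_right (by norm_num) hi.2)
    have hsb : (∑ i ∈ Finset.Icc 1 (k-1), 2 ^ 2 ^ i) ≤ (k-1) * M := by
      calc (∑ i ∈ Finset.Icc 1 (k-1), 2 ^ 2 ^ i) ≤ ∑ _i ∈ Finset.Icc 1 (k-1), M :=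
        Finset.sum_le_sum hMb
      _ = (k-1) * M := by rw [Finset.sum_const]; simp [Nat.card_Icc, Nat.smul_one_eq_cast]
    have hkM : k ≤ M := by
      have h1 : k - 1 < 2 ^ (k-1) := Nat.lt_two_pow_self
      have h2 : 2 ^ (k-1) ≤ M := Nat.pow_le_pow_right (by norm_num) (Nat.le_of_lt (Nat.lt_two_pow_self))
      omega
    have hsq : 2 ^ 2 ^ k = M * M := by
      rw [hM, ← pow_add]
      congr 1
      have hk1 : k - 1 + 1 = k := by omega
      calc 2 ^ k = 2 ^ (k - 1 + 1) := by rw [hk1]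
      _ = 2 ^ (k-1) * 2 := pow_succ _ _
      _ = 2 ^ (k-1) + 2 ^ (k-1) := by ring
    have hM4 : 4 ≤ M := by
      have : 2 ^ 2 ^ 1 ≤ M := Nat.pow_le_pow_right (by norm_num) (Nat.pow_le_pow_right (by norm_num) (by omega))
      simpa using this
    calc 1 + (∑ i ∈ Finset.Icc 1 (k-1), 2 ^ 2 ^ i) ≤ 1 + (k-1) * M := by omega
    _ ≤ M * M := by
        have key : (k - 1 + 1) * M ≤ M * M := Nat.mul_le_mul_right _ (by omega)
        have hexp : (k - 1 + 1) * M = (k-1) * M + M := by ring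
        linarith
    _ = 2 ^ 2 ^ k := hsq.symm
  have hE : (∑ e ∈ S, (e : ℝ)) ≤ a := by
    have : ((∑ e ∈ S, e : ℕ) : ℝ) ≤ ((2 ^ 2 ^ k : ℕ) : ℝ) := Nat.cast_le.mpr hEnat
    push_cast at this
    simpa [ha] using this
  -- term bound
  have hterm : ∀ e ∈ S, 1 - (e : ℝ) / a ≤ (1 - 1 / (2 * a)) ^ (2 * e) := by
    intro e _
    have hb : (-2 : ℝ) ≤ -(1 / (2 * a)) := by
      have : 1 / (2 * a) ≤ 1 := by
        rw [div_le_one (by linarith)]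
        linarith
      linarith
    have := one_add_mul_le_pow hb (2 * e)
    have heq : (1 : ℝ) + (2 * e : ℕ) * (-(1 / (2 * a))) = 1 - (e:ℝ) / a := by
      push_cast
      field_simp
      ring
    calc 1 - (e : ℝ) / a = 1 + (2 * e : ℕ) * (-(1 / (2 * a))) := heq.symm
    _ ≤ (1 + -(1 / (2 * a))) ^ (2 * e) := this
    _ = (1 - 1 / (2 * a)) ^ (2 * e) := by ring_nf
  have h1 : ∑ e ∈ S, (1 - (e : ℝ) / a) ≤ ∑ e ∈ S, (1 - 1 / (2 * a)) ^ (2 * e) :=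
    Finset.sum_le_sum hterm
  have h2 : ∑ e ∈ S, (1 - (e : ℝ) / a) = S.card - (∑ e ∈ S, (e : ℝ)) / a := by
    rw [Finset.sum_sub_distrib, Finset.sum_const, ← Finset.sum_div]
    simp
  have h3 : (k : ℝ) ≤ ∑ e ∈ S, (1 - (e : ℝ) / a) := by
    rw [h2, hcard]
    push_cast
    have : (∑ e ∈ S, (e : ℝ)) / a ≤ 1 := by
      rw [div_le_one ha0]; exact hE
    linarith
  linarith
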